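/- Let r ≥ 2, p ≥ 2 be integers and let 0 < c ≤ 1. For all sufficiently large n and every integer e with c·C(n,r) ≤ e ≤ C(n,r), there exists an r-uniform hypergraph on n vertices with exactly e edges that is the complement of the vertex-disjoint union of a complete r-graph and a p-sparse r-graph; equivalently, it is obtained from a complete r-graph on some k ≤ n vertices by deleting the edges of a p-sparse r-graph and adding n−k isolated vertices. -/

import Mathlib

open Finset
open scoped Classical

/-- An `r`-graph on `Fin n` is `p`-sparse if every `p` vertices span at most `p` edges. -/
def Sparse (n p : ℕ) (G : Finset (Finset (Fin n))) : Prop :=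
  ∀ S : Finset (Fin n), S.card = p → (G.filter (fun t => t ⊆ S)).card ≤ p

/-- Upper bound on the number of `d`-subsets of `E` containing a fixed `F ⊆ E`. -/
lemma card_filter_superset_le {α : Type*} [DecidableEq α] (E F : Finset α)
    (hFE : F ⊆ E) (d : ℕ) :
    ((E.powersetCard d).filter (fun H => F ⊆ H)).card
      ≤ (E.card - F.card).choose (d - F.card) := by
  rw [← Finset.card_sdiff_of_subset hFE, ← Finset.card_powersetCard (d - F.card) (E \ F)]
  apply Finset.card_le_card_of_injOn (fun H => H \ F)
  · intro H hH
    simp only [Finset.mem_coe, Finset.mem_filter, Finset.mem_powersetCard] at hH ⊢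
    obtain ⟨⟨hHE, hcard⟩, hFH⟩ := hH
    refine ⟨Finset.sdiff_subset_sdiff hHE le_rfl, ?_⟩
    rw [Finset.card_sdiff_of_subset hFH, hcard]
  · intro H1 h1 H2 h2 hEq
    simp only [Finset.coe_filter, Set.mem_setOf_eq] at h1 h2
    conv_lhs => rw [← Finset.sdiff_union_of_subset h1.2]
    conv_rhs => rw [← Finset.sdiff_union_of_subset h2.2]
    simp only [] at hEq
    rw [hEq]

/-- For all sufficiently large `K`, there is a `p`-sparse subgraph of the complete
`r`-graph on `K` of any size up to `C(|K|-1, r-1)`. -/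
lemma exists_sparse_subgraph (r p : ℕ) (hr : 2 ≤ r) (hp : 2 ≤ p) :
    ∃ K₀ : ℕ, r ≤ K₀ ∧ ∀ (n : ℕ) (K : Finset (Fin n)), K₀ ≤ K.card →
      ∀ d : ℕ, d ≤ (K.card - 1).choose (r - 1) →
      ∃ H : Finset (Finset (Fin n)), H ⊆ K.powersetCard r ∧ Sparse n p H ∧ H.card = d := by
  set A : ℕ := (p.choose r).choose (p + 1) with hA
  set C2 : ℕ := r ^ r * Nat.factorial r with hC2
  set C3 : ℕ := A * Nat.factorial (p + 1) * (2 * C2) ^ (p + 1) with hC3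
  have hC2pos : 0 < C2 := Nat.mul_pos (Nat.pow_pos (by omega)) r.factorial_pos
  refine ⟨C3 + 2 * (p + 1) * C2 + p + 2 * r + 1, by omega, ?_⟩
  intro n K hK d hd
  set k := K.card with hk
  set E : Finset (Finset (Fin n)) := K.powersetCard r with hE
  have hEcard : E.card = k.choose r := Finset.card_powersetCard r K
  have hk1 : 1 ≤ k := by omega
  have hkr : k.choose r = (k - 1).choose (r - 1) + (k - 1).choose r := by
    have h := Nat.choose_succ_succ' (k - 1) (r - 1)
    rw [show k - 1 + 1 = k by omega, show r - 1 + 1 = r by omega] at h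
    exact h
  have hdN : d ≤ k.choose r := by omega
  -- trivial case: at most `p` edges
  by_cases hdp : d ≤ p
  · obtain ⟨H, hHE, hHcard⟩ := Finset.exists_subset_card_eq (show d ≤ E.card by omega)
    refine ⟨H, hHE, fun S hS => ?_, hHcard⟩
    calc (H.filter (fun t => t ⊆ S)).card ≤ H.card := Finset.card_filter_le _ _
      _ ≤ p := by omega
  push_neg at hdp
  -- the set of "bad" (p+1)-tuples of edges
  set N : ℕ := k.choose r with hN
  set B : Finset (Finset (Finset (Fin n))) :=
    (E.powersetCard (p + 1)).filter (fun F => (F.sup id).card ≤ p) with hB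
  -- bound on the number of bad tuples
  have hBcard : B.card ≤ k ^ p * A := by
    have hsub : B ⊆ (K.powersetCard p).biUnion
        (fun S => (S.powersetCard r).powersetCard (p + 1)) := by
      intro F hF
      simp only [hB, Finset.mem_filter, Finset.mem_powersetCard] at hF
      obtain ⟨⟨hFE, hFcard⟩, hsup⟩ := hF
      have hsupK : F.sup id ⊆ K := by
        refine Finset.le_iff_subset.mp (Finset.sup_le fun t ht => ?_)
        exact Finset.le_iff_subset.mpr (Finset.mem_powersetCard.mp (hFE ht)).1
      obtain ⟨S, hS1, hS2, hS3⟩ := Finset.exists_subsuperset_card_eq hsupK hsup (by omega)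
      refine Finset.mem_biUnion.mpr ⟨S, Finset.mem_powersetCard.mpr ⟨hS2, hS3⟩, ?_⟩
      refine Finset.mem_powersetCard.mpr ⟨fun t ht => ?_, hFcard⟩
      refine Finset.mem_powersetCard.mpr ⟨?_, (Finset.mem_powersetCard.mp (hFE ht)).2⟩
      exact (Finset.le_iff_subset.mp ((Finset.le_sup (f := id) ht).trans
        (Finset.le_iff_subset.mpr hS1)))
    calc B.card ≤ (K.powersetCard p).card * A := by
          refine (Finset.card_le_card hsub).trans ?_
          refine Finset.card_biUnion_le_card_mul _ _ _ fun S hS => ?_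
          rw [Finset.card_powersetCard, Finset.card_powersetCard,
            (Finset.mem_powersetCard.mp hS).2]
      _ ≤ k ^ p * A := by
          rw [Finset.card_powersetCard]
          exact Nat.mul_le_mul_right _ (Nat.choose_le_pow _ _)
  -- the key numerical inequality
  have hkC2N : k ^ r ≤ C2 * N := by
    have ht : k ≤ r * (k + 1 - r) := by
      have h1 : 1 ≤ k + 1 - r := by omega
      calc k = (k + 1 - r) + (r - 1) * 1 := by omega
        _ ≤ (k + 1 - r) + (r - 1) * (k + 1 - r) :=
            Nat.add_le_add_left (Nat.mul_le_mul_left _ h1) _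
        _ = (1 + (r - 1)) * (k + 1 - r) := by ring
        _ = r * (k + 1 - r) := by rw [show 1 + (r - 1) = r by omega]
    calc k ^ r ≤ (r * (k + 1 - r)) ^ r := Nat.pow_le_pow_left ht r
      _ = r ^ r * (k + 1 - r) ^ r := by rw [Nat.mul_pow]
      _ ≤ r ^ r * (Nat.factorial r * N) := by
          refine Nat.mul_le_mul_left _ ?_
          rw [← Nat.descFactorial_eq_factorial_mul_choose]
          exact Nat.pow_sub_le_descFactorial k r
      _ = C2 * N := by rw [hC2, mul_assoc]
  have hNge : 2 * (p + 1) ≤ N := by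
    have h1 : C2 * (2 * (p + 1)) ≤ C2 * N := by
      calc C2 * (2 * (p + 1)) = 2 * (p + 1) * C2 := by ring
        _ ≤ k := by omega
        _ ≤ k ^ r := Nat.le_self_pow (by omega) k
        _ ≤ C2 * N := hkC2N
    exact Nat.le_of_mul_le_mul_left h1 hC2pos
  have h2C2 : C2 * N ≤ 2 * C2 * (N - p) := by
    have h3 : N ≤ 2 * (N - p) := by omega
    calc C2 * N ≤ C2 * (2 * (N - p)) := Nat.mul_le_mul_left _ h3
      _ = 2 * C2 * (N - p) := by ring
  have hdesc : (N - p) ^ (p + 1) ≤ Nat.factorial (p + 1) * N.choose (p + 1) := by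
    rw [← Nat.descFactorial_eq_factorial_mul_choose]
    have h4 := Nat.pow_sub_le_descFactorial N (p + 1)
    rwa [show N + 1 - (p + 1) = N - p by omega] at h4
  set s : ℕ := p + (r - 1) * (p + 1) with hs
  have hexp : r * (p + 1) = s + 1 := by
    obtain ⟨r', rfl⟩ : ∃ r', r = r' + 2 := ⟨r - 2, by omega⟩
    rw [hs, show r' + 2 - 1 = r' + 1 from rfl]
    ring
  have hkspos : 0 < k ^ s := Nat.pow_pos (by omega)
  have key : A * k ^ s < N.choose (p + 1) := by
    have hmain : A * k ^ s * Nat.factorial (p + 1) * (2 * C2) ^ (p + 1) < k * k ^ s := by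
      calc A * k ^ s * Nat.factorial (p + 1) * (2 * C2) ^ (p + 1)
          = (A * Nat.factorial (p + 1) * (2 * C2) ^ (p + 1)) * k ^ s := by ring
        _ = C3 * k ^ s := by rw [hC3]
        _ < k * k ^ s := by
            have : C3 < k := by omega
            exact (Nat.mul_lt_mul_right hkspos).mpr this
    have hup : k * k ^ s ≤ (2 * C2) ^ (p + 1) * (N - p) ^ (p + 1) := by
      calc k * k ^ s = k ^ (s + 1) := by ring
        _ = k ^ (r * (p + 1)) := by rw [hexp]
        _ = (k ^ r) ^ (p + 1) := by rw [pow_mul]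
        _ ≤ (C2 * N) ^ (p + 1) := Nat.pow_le_pow_left hkC2N _
        _ ≤ (2 * C2 * (N - p)) ^ (p + 1) := Nat.pow_le_pow_left h2C2 _
        _ = (2 * C2) ^ (p + 1) * (N - p) ^ (p + 1) := by rw [mul_pow]
    have h5 : A * k ^ s * Nat.factorial (p + 1) < (N - p) ^ (p + 1) := by
      have h6 := lt_of_lt_of_le hmain hup
      rw [mul_comm ((2 * C2) ^ (p + 1)) ((N - p) ^ (p + 1))] at h6
      exact lt_of_mul_lt_mul_right h6 (Nat.zero_le _)
    have h7 : A * k ^ s * Nat.factorial (p + 1) < Nat.factorial (p + 1) * N.choose (p + 1) :=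
      lt_of_lt_of_le h5 hdesc
    have h8 : Nat.factorial (p + 1) * (A * k ^ s) <
        Nat.factorial (p + 1) * N.choose (p + 1) := by
      calc Nat.factorial (p + 1) * (A * k ^ s) = A * k ^ s * Nat.factorial (p + 1) := by ring
        _ < Nat.factorial (p + 1) * N.choose (p + 1) := h7
    exact Nat.lt_of_mul_lt_mul_left h8
  -- deduce the union bound inequality
  have hdk : d ≤ k ^ (r - 1) :=
    le_trans hd (le_trans (Nat.choose_le_pow _ _) (Nat.pow_le_pow_left (by omega) _))
  have hstar : B.card * d.choose (p + 1) < N.choose (p + 1) := by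
    calc B.card * d.choose (p + 1) ≤ (k ^ p * A) * (k ^ (r - 1)) ^ (p + 1) :=
          Nat.mul_le_mul hBcard
            (le_trans (Nat.choose_le_pow _ _) (Nat.pow_le_pow_left hdk _))
      _ = A * k ^ s := by rw [← pow_mul, hs]; ring
      _ < N.choose (p + 1) := key
  have hjd : p + 1 ≤ d := by omega
  have hQpos : 0 < (N - (p + 1)).choose (d - (p + 1)) :=
    Nat.choose_pos (by omega)
  have hmain2 : B.card * ((N - (p + 1)).choose (d - (p + 1))) < N.choose d := by
    have hid : N.choose d * d.choose (p + 1)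
        = N.choose (p + 1) * ((N - (p + 1)).choose (d - (p + 1))) := Nat.choose_mul hjd
    have h9 : B.card * ((N - (p + 1)).choose (d - (p + 1))) * d.choose (p + 1)
        < N.choose d * d.choose (p + 1) := by
      calc B.card * ((N - (p + 1)).choose (d - (p + 1))) * d.choose (p + 1)
          = (B.card * d.choose (p + 1)) * ((N - (p + 1)).choose (d - (p + 1))) := by ring
        _ < N.choose (p + 1) * ((N - (p + 1)).choose (d - (p + 1))) :=
            (Nat.mul_lt_mul_right hQpos).mpr hstar
        _ = N.choose d * d.choose (p + 1) := hid.symm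
    exact lt_of_mul_lt_mul_right h9 (Nat.zero_le _)
  -- union bound: some d-set avoids all bad configurations
  set badH : Finset (Finset (Finset (Fin n))) :=
    (E.powersetCard d).filter (fun H => ∃ F ∈ B, F ⊆ H) with hbadH
  have hbadcard : badH.card < (E.powersetCard d).card := by
    have hsub : badH ⊆ B.biUnion (fun F => (E.powersetCard d).filter (fun H => F ⊆ H)) := by
      intro H hH
      simp only [hbadH, Finset.mem_filter] at hH
      obtain ⟨hH1, F, hF, hFH⟩ := hH
      exact Finset.mem_biUnion.mpr ⟨F, hF, Finset.mem_filter.mpr ⟨hH1, hFH⟩⟩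
    calc badH.card ≤ B.card * ((N - (p + 1)).choose (d - (p + 1))) := by
          refine (Finset.card_le_card hsub).trans ?_
          refine Finset.card_biUnion_le_card_mul _ _ _ fun F hF => ?_
          have hFmem := Finset.mem_powersetCard.mp (Finset.mem_filter.mp hF).1
          have h10 := card_filter_superset_le E F hFmem.1 d
          rwa [hEcard, hFmem.2] at h10
      _ < N.choose d := hmain2
      _ = (E.powersetCard d).card := by rw [Finset.card_powersetCard, hEcard]
  obtain ⟨H, hHmem, hHbad⟩ : ∃ H ∈ E.powersetCard d, H ∉ badH := by
    by_contra hcon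
    push_neg at hcon
    have h11 : (E.powersetCard d) ⊆ badH := fun H hH => hcon H hH
    exact absurd (Finset.card_le_card h11) (by omega)
  obtain ⟨hHE', hHcard⟩ := Finset.mem_powersetCard.mp hHmem
  refine ⟨H, hHE', ?_, hHcard⟩
  intro S hS
  by_contra hcon
  push_neg at hcon
  obtain ⟨F, hFsub, hFcard⟩ := Finset.exists_subset_card_eq
    (show p + 1 ≤ (H.filter (fun t => t ⊆ S)).card by omega)
  have hFB : F ∈ B := by
    refine Finset.mem_filter.mpr ⟨Finset.mem_powersetCard.mpr ⟨?_, hFcard⟩, ?_⟩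
    · exact (hFsub.trans (Finset.filter_subset _ _)).trans hHE'
    · have hsupS : F.sup id ⊆ S := Finset.le_iff_subset.mp (Finset.sup_le fun t ht =>
        Finset.le_iff_subset.mpr (Finset.mem_filter.mp (hFsub ht)).2)
      exact le_trans (Finset.card_le_card hsupS) (le_of_eq hS)
  exact hHbad (Finset.mem_filter.mpr
    ⟨hHmem, F, hFB, hFsub.trans (Finset.filter_subset _ _)⟩)

theorem realise_coclique_minus_sparse (r p : ℕ) (hr : 2 ≤ r) (hp : 2 ≤ p)
    (c : ℝ) (hc0 : 0 < c) (hc1 : c ≤ 1) :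
    ∃ N : ℕ, ∀ n ≥ N, ∀ e : ℕ, c * (n.choose r : ℝ) ≤ (e : ℝ) → e ≤ n.choose r →
      ∃ (K : Finset (Fin n)) (H : Finset (Finset (Fin n))),
        H ⊆ K.powersetCard r ∧ Sparse n p H ∧
        K.card.choose r = e + H.card := by
  obtain ⟨K₀, hK₀r, hL1⟩ := exists_sparse_subgraph r p hr hp
  set M : ℕ := K₀.choose r with hM
  obtain ⟨N₁, hN₁⟩ := exists_nat_gt (((r * M : ℕ) : ℝ) / c)
  refine ⟨max r N₁, fun n hn e he1 he2 => ?_⟩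
  have hnr : r ≤ n := le_trans (le_max_left _ _) hn
  have hnN₁ : (N₁ : ℝ) ≤ n := by exact_mod_cast le_trans (le_max_right _ _) hn
  have hrC : n ≤ r * n.choose r := by
    have h1 := Nat.add_one_mul_choose_eq (n - 1) (r - 1)
    rw [show n - 1 + 1 = n by omega, show r - 1 + 1 = r by omega] at h1
    have h2 : 1 ≤ (n - 1).choose (r - 1) := Nat.choose_pos (by omega)
    calc n = n * 1 := (mul_one n).symm
      _ ≤ n * (n - 1).choose (r - 1) := Nat.mul_le_mul_left _ h2
      _ = n.choose r * r := h1
      _ = r * n.choose r := mul_comm _ _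
  have hMe : M < e := by
    have hrpos : (0 : ℝ) < r := by exact_mod_cast (show 0 < r by omega)
    have h3 : ((r * M : ℕ) : ℝ) < N₁ * c := (div_lt_iff₀ hc0).mp hN₁
    have h4 : (r : ℝ) * M < c * n := by
      push_cast at h3 ⊢
      nlinarith
    have h5 : c * (n : ℝ) ≤ r * (c * n.choose r) := by
      have h5' : (n : ℝ) ≤ r * n.choose r := by exact_mod_cast hrC
      nlinarith
    have h6 : (r : ℝ) * M < r * e := by
      calc (r : ℝ) * M < c * n := h4
        _ ≤ r * (c * n.choose r) := h5
        _ ≤ r * e := by nlinarith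
    exact_mod_cast (mul_lt_mul_iff_right₀ hrpos).mp h6
  have he0 : 1 ≤ e := by
    have hM1 : 0 < M := Nat.choose_pos hK₀r
    omega
  have hex : ∃ m : ℕ, e ≤ m.choose r := ⟨n, he2⟩
  set k := Nat.find hex with hkdef
  have hk : e ≤ k.choose r := Nat.find_spec hex
  have hkn : k ≤ n := Nat.find_le he2
  have hk1 : 1 ≤ k := by
    rcases Nat.eq_zero_or_pos k with h | h
    · exfalso
      have h' := hk
      rw [h, Nat.choose_eq_zero_of_lt (by omega)] at h'
      omega
    · exact h
  have hprev : (k - 1).choose r < e := by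
    have h := Nat.find_min hex (show k - 1 < k by omega)
    omega
  have hkK₀ : K₀ ≤ k := by
    by_contra hcon
    push_neg at hcon
    have : k.choose r ≤ M := Nat.choose_le_choose r (by omega)
    omega
  have hkr : k.choose r = (k - 1).choose (r - 1) + (k - 1).choose r := by
    have h := Nat.choose_succ_succ' (k - 1) (r - 1)
    rw [show k - 1 + 1 = k by omega, show r - 1 + 1 = r by omega] at h
    exact h
  set d := k.choose r - e with hddef
  have hd : d ≤ (k - 1).choose (r - 1) := by omega
  obtain ⟨K, hKuniv, hKcard⟩ := Finset.exists_subset_card_eq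
    (show k ≤ (univ : Finset (Fin n)).card by simpa using hkn)
  obtain ⟨H, hHE, hHsp, hHcard⟩ := hL1 n K (by rw [hKcard]; exact hkK₀) d
    (by rw [hKcard]; exact hd)
  exact ⟨K, H, hHE, hHsp, by rw [hKcard, hHcard]; omega⟩
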